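/- Let p ≥ 2 be real, A a real k × m matrix, b ∈ ℝ^k, g ∈ ℝ^m, r ∈ ℝ^m with r ≥ 0 entrywise, and s ≥ 0. Define obj₁(x) = gᵀx − h_p(r, s, x). Let x₀ satisfy Ax₀ = b, and define g' = 2^p(g − ∇_x h_p(r, s, x)|_{x = x₀}), r' = r + s|x₀|^{p-2}, and obj₂(δ) = (g')ᵀδ − h_p(r', s, δ). Then for any δ with Aδ = 0, the vector x₁ = x₀ + 2^{-3p}δ satisfies Ax₁ = b and obj₁(x₁) ≥ obj₁(x₀) + 2^{-4p}·obj₂(δ). -/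

import Mathlib

open Finset Matrix

/-- The `r`-smoothed `s`-weighted `p`-norm:
`h_p(r, s, x) = Σ_i (r_i x_i^2 + s |x_i|^p)`. -/
noncomputable def hP (p : ℝ) {m : ℕ} (r : Fin m → ℝ) (s : ℝ) (x : Fin m → ℝ) : ℝ :=
  ∑ i, (r i * x i ^ 2 + s * |x i| ^ p)

/-- The gradient of `h_p(r, s, ·)` at `x`: its `i`-th entry is
`2 r_i x_i + p s |x_i|^{p-2} x_i`. -/
noncomputable def gradHP (p : ℝ) {m : ℕ} (r : Fin m → ℝ) (s : ℝ) (x : Fin m → ℝ) :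
    Fin m → ℝ :=
  fun i => 2 * r i * x i + p * s * |x i| ^ (p - 2) * x i

/-- The objective `obj(x) = gᵀx − h_p(r, s, x)` of a smoothed `p`-norm problem. -/
noncomputable def objFn (p : ℝ) {m : ℕ} (g r : Fin m → ℝ) (s : ℝ) (x : Fin m → ℝ) : ℝ :=
  (∑ i, g i * x i) - hP p r s x


/-- `x ≤ 2^x` for all real `x`. -/
lemma le_two_rpow (x : ℝ) : x ≤ (2:ℝ) ^ x := by
  rcases le_or_gt x 0 with h | h
  · exact h.trans (Real.rpow_pos_of_pos two_pos x).le
  · rw [Real.rpow_def_of_pos two_pos]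
    have h1 := Real.add_one_le_exp (Real.log 2 * x - 1)
    have h2 : Real.exp (Real.log 2 * x) = Real.exp 1 * Real.exp (Real.log 2 * x - 1) := by
      rw [← Real.exp_add]; ring_nf
    have h3 : (2:ℝ) ≤ Real.exp 1 := by
      have := Real.add_one_le_exp 1; linarith
    have h4 : (0.6931471803 : ℝ) < Real.log 2 := Real.log_two_gt_d9
    nlinarith [Real.exp_pos (Real.log 2 * x - 1)]

/-- Convexity upper tangent: `(1+u)^q ≤ 1 + q u (1+u)^(q-1)` for `u ≥ -1`, `q ≥ 1`. -/
lemma rpow_le_one_add_mul (u q : ℝ) (hu : -1 ≤ u) (hq : 1 ≤ q) :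
    (1 + u) ^ q ≤ 1 + q * u * (1 + u) ^ (q - 1) := by
  rcases eq_or_lt_of_le hu with rfl | hu'
  · have h0 : (1:ℝ) + -1 = 0 := by ring
    rcases eq_or_lt_of_le hq with rfl | hq'
    · simp [h0]
    · rw [h0, Real.zero_rpow (by linarith), Real.zero_rpow (by linarith)]
      norm_num
  · have h1 : (0:ℝ) < 1 + u := by linarith
    have hs : -1 ≤ -u / (1 + u) := by
      rw [neg_div, neg_le_neg_iff]
      rw [div_le_one h1]; linarith
    have hbern := one_add_mul_self_le_rpow_one_add hs hq
    have h2 : 1 + -u / (1 + u) = 1 / (1 + u) := by field_simp; ring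
    rw [h2] at hbern
    have h3 : ((1:ℝ) / (1 + u)) ^ q = ((1 + u) ^ q)⁻¹ := by
      rw [one_div, Real.inv_rpow h1.le]
    rw [h3] at hbern
    have hp : (0:ℝ) < (1 + u) ^ q := Real.rpow_pos_of_pos h1 q
    have h4 : (1 + u) ^ q * (1 + q * (-u / (1 + u))) ≤ 1 := by
      calc (1 + u) ^ q * (1 + q * (-u / (1 + u))) ≤ (1 + u) ^ q * ((1 + u) ^ q)⁻¹ := by
            exact mul_le_mul_of_nonneg_left hbern hp.le
        _ = 1 := mul_inv_cancel₀ hp.ne'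
    have h5 : (1 + u) ^ q * (q * (u / (1 + u))) = q * u * (1 + u) ^ (q - 1) := by
      rw [Real.rpow_sub h1, Real.rpow_one]
      field_simp
    have h6 : (1 + u) ^ q * (1 + q * (-u / (1 + u))) = (1 + u) ^ q - (1 + u) ^ q * (q * (u / (1 + u))) := by ring
    linarith [h4, h5, h6]

lemma sq_exp_bound (p : ℝ) (hp : 2 ≤ p) : p ^ 2 ≤ (2:ℝ) ^ (p + 2) := by
  have h1 := le_two_rpow (p / 2)
  have h2 : (2:ℝ) ^ (p/2) * (2:ℝ) ^ (p/2) = (2:ℝ) ^ p := by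
    rw [← Real.rpow_add two_pos]; ring_nf
  have h3 : (2:ℝ) ^ (p + 2) = (2:ℝ) ^ p * 4 := by
    rw [Real.rpow_add two_pos]; norm_num
  have hp2 : (0:ℝ) < p / 2 := by linarith
  nlinarith [h1, h2, h3]

/-- Core quadratic Bernoulli-type upper bound. -/
lemma core_ineq (p u : ℝ) (hp : 2 ≤ p) (hu1 : -1 ≤ u) (hu2 : u ≤ 1) :
    (1 + u) ^ p ≤ 1 + p * u + (2:ℝ) ^ (2 * p) * u ^ 2 := by
  have hA := rpow_le_one_add_mul u p hu1 (by linarith)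
  have hpe : p ^ 2 ≤ (2:ℝ) ^ (p + 2) := sq_exp_bound p hp
  have hmono : (2:ℝ) ^ (p + 2) ≤ (2:ℝ) ^ (2 * p) := by
    apply Real.rpow_le_rpow_left_iff (by norm_num : (1:ℝ) < 2) |>.mpr
    linarith
  rcases le_or_gt 0 u with hu0 | hu0
  · have hB := rpow_le_one_add_mul u (p - 1) hu1 (by linarith)
    have hC : (1 + u) ^ (p - 2) ≤ (2:ℝ) ^ (p - 2) := by
      apply Real.rpow_le_rpow (by linarith) (by linarith) (by linarith)
    have hCmul : (2:ℝ) ^ (p - 2) * (2:ℝ) ^ (p + 2) = (2:ℝ) ^ (2 * p) := by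
      rw [← Real.rpow_add two_pos]; ring_nf
    have hD : (p - 1 - 1) = p - 2 := by ring
    rw [hD] at hB
    have hpos : (0:ℝ) < (2:ℝ) ^ (p - 2) := Real.rpow_pos_of_pos two_pos _
    have hE : (1 + u) ^ (p - 1) ≤ 1 + (p - 1) * u * (2:ℝ) ^ (p - 2) := by
      have : (p - 1) * u * (1 + u) ^ (p - 2) ≤ (p - 1) * u * (2:ℝ) ^ (p - 2) := by
        apply mul_le_mul_of_nonneg_left hC (by nlinarith)
      linarith
    have hF : p * u * (1 + u) ^ (p - 1) ≤ p * u * (1 + (p - 1) * u * (2:ℝ) ^ (p - 2)) := by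
      apply mul_le_mul_of_nonneg_left hE (by nlinarith)
    have hG : p * (p-1) * (2:ℝ)^(p-2) ≤ (2:ℝ) ^ (2*p) := by
      nlinarith [mul_le_mul_of_nonneg_right hpe hpos.le, hCmul, hpos, hp]
    have hH : p*(p-1)*(2:ℝ)^(p-2)*u^2 ≤ (2:ℝ)^(2*p)*u^2 :=
      mul_le_mul_of_nonneg_right hG (sq_nonneg u)
    have hring : p * u * (1 + (p - 1) * u * (2:ℝ)^(p-2))
        = p*u + p*(p-1)*(2:ℝ)^(p-2)*u^2 := by ring
    linarith [hA, hF, hH, hring]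
  · have hB := one_add_mul_self_le_rpow_one_add hu1 (by linarith : (1:ℝ) ≤ p - 1)
    have hF : p * u * (1 + u) ^ (p - 1) ≤ p * u * (1 + (p - 1) * u) := by
      apply mul_le_mul_of_nonpos_left hB (by nlinarith)
    have hG : p * (p-1) ≤ (2:ℝ) ^ (2*p) := by nlinarith [hpe, hmono, hp]
    have hH : p*(p-1)*u^2 ≤ (2:ℝ)^(2*p)*u^2 := mul_le_mul_of_nonneg_right hG (sq_nonneg u)
    have hring : p * u * (1 + (p - 1) * u) = p*u + p*(p-1)*u^2 := by ring
    linarith [hA, hF, hH, hring]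

lemma key_small_pos (p : ℝ) (hp : 2 ≤ p) (b t : ℝ) (hb : 0 < b) (ht : |t| ≤ b) :
    (b + t) ^ p ≤ b ^ p + p * b ^ (p - 2) * b * t + (2:ℝ) ^ (2 * p) * (b ^ (p - 2) * t ^ 2) := by
  have habs := abs_le.mp ht
  set u := t / b with hu
  have hu1 : -1 ≤ u := by rw [hu, le_div_iff₀ hb]; linarith
  have hu2 : u ≤ 1 := by rw [hu, div_le_one hb]; linarith
  have hcore := core_ineq p u hp hu1 hu2
  have hbt : b + t = b * (1 + u) := by rw [hu]; field_simp
  have h1u : (0:ℝ) ≤ 1 + u := by linarith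
  have hsplit : (b + t) ^ p = b ^ p * (1 + u) ^ p := by
    rw [hbt, Real.mul_rpow hb.le h1u]
  have hap : b ^ p = b ^ (p - 2) * b ^ 2 := by
    rw [← Real.rpow_natCast b 2, ← Real.rpow_add hb]; norm_num
  have hbp : (0:ℝ) < b ^ p := Real.rpow_pos_of_pos hb p
  have hmul := mul_le_mul_of_nonneg_left hcore hbp.le
  rw [← hsplit] at hmul
  have e1 : b ^ p * (p * u) = p * b ^ (p - 2) * b * t := by
    rw [hap, hu]; field_simp
  have e2 : b ^ p * ((2:ℝ) ^ (2*p) * u ^ 2) = (2:ℝ) ^ (2*p) * (b ^ (p - 2) * t ^ 2) := by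
    rw [hap, hu]; field_simp
  nlinarith [hmul, e1, e2]

lemma key_small (p : ℝ) (hp : 2 ≤ p) (a t : ℝ) (ht : |t| ≤ |a|) :
    |a + t| ^ p ≤ |a| ^ p + p * |a| ^ (p - 2) * a * t
      + (2:ℝ) ^ (2 * p) * (|a| ^ (p - 2) * t ^ 2) := by
  rcases lt_trichotomy a 0 with ha | ha | ha
  · have hb : (0:ℝ) < -a := by linarith
    have ht' : |-t| ≤ -a := by rwa [abs_neg, ← abs_of_neg ha]
    have h := key_small_pos p hp (-a) (-t) hb ht'
    have h1 : t ≤ -a := (le_abs_self t).trans (by rwa [abs_of_neg ha] at ht)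
    have habs : |a + t| = -a + -t := by
      rw [abs_of_nonpos (by linarith)]; ring
    rw [habs, abs_of_neg ha]
    calc (-a + -t) ^ p ≤ (-a) ^ p + p * (-a) ^ (p-2) * (-a) * (-t)
          + (2:ℝ) ^ (2*p) * ((-a) ^ (p-2) * (-t) ^ 2) := h
      _ = (-a) ^ p + p * (-a) ^ (p-2) * a * t + (2:ℝ) ^ (2*p) * ((-a) ^ (p-2) * t ^ 2) := by
          ring
  · subst ha
    have ht0 : t = 0 := by simpa using ht
    subst ht0
    simp [Real.zero_rpow (by linarith : p ≠ 0)]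
  · have ht' : |t| ≤ a := by rwa [abs_of_pos ha] at ht
    have habs : |a + t| = a + t := by
      rw [abs_of_nonneg]; have := abs_le.mp ht'; linarith
    rw [habs, abs_of_pos ha]
    exact key_small_pos p hp a t ha ht'

lemma two_rpow_pos (x : ℝ) : (0:ℝ) < (2:ℝ) ^ x := Real.rpow_pos_of_pos two_pos x

lemma key_main (p : ℝ) (hp : 2 ≤ p) (a d : ℝ) :
    |a + (2:ℝ) ^ (-(3*p)) * d| ^ p ≤
      |a| ^ p + p * |a| ^ (p - 2) * a * ((2:ℝ) ^ (-(3*p)) * d)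
        + (2:ℝ) ^ (-(4*p)) * (|a| ^ (p - 2) * d ^ 2 + |d| ^ p) := by
  set ε : ℝ := (2:ℝ) ^ (-(3*p)) with hε
  have hεpos : (0:ℝ) < ε := two_rpow_pos _
  have hcpos : (0:ℝ) < (2:ℝ) ^ (-(4*p)) := two_rpow_pos _
  have hdp : (0:ℝ) ≤ |d| ^ p := Real.rpow_nonneg (abs_nonneg d) p
  have hap2 : (0:ℝ) ≤ |a| ^ (p-2) := Real.rpow_nonneg (abs_nonneg a) _
  rcases le_or_gt (|ε * d|) (|a|) with hcase | hcase
  · -- small perturbation case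
    have h := key_small p hp a (ε * d) hcase
    have hε2 : ε ^ 2 = (2:ℝ) ^ (-(6*p)) := by
      rw [hε, ← Real.rpow_natCast ((2:ℝ) ^ (-(3*p))) 2, ← Real.rpow_mul two_pos.le]
      ring_nf
    have hconst : (2:ℝ) ^ (2*p) * ε ^ 2 = (2:ℝ) ^ (-(4*p)) := by
      rw [hε2, ← Real.rpow_add two_pos]; ring_nf
    have e1 : (2:ℝ) ^ (2*p) * (|a| ^ (p-2) * (ε * d) ^ 2)
        = (2:ℝ) ^ (-(4*p)) * (|a| ^ (p-2) * d ^ 2) := by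
      rw [← hconst]; ring
    nlinarith [h, e1, mul_nonneg hcpos.le hdp]
  · -- large perturbation case
    have hεd : |ε * d| = ε * |d| := by rw [abs_mul, abs_of_pos hεpos]
    have hεdpos : (0:ℝ) < ε * |d| := lt_of_le_of_lt (abs_nonneg a) (hεd ▸ hcase)
    have ha_lt : |a| < ε * |d| := hεd ▸ hcase
    -- bound on |a + εd|^p
    have h1 : |a + ε * d| ≤ 2 * (ε * |d|) := by
      calc |a + ε * d| ≤ |a| + |ε * d| := abs_add_le _ _
        _ ≤ 2 * (ε * |d|) := by rw [hεd]; linarith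
    have h2 : |a + ε * d| ^ p ≤ (2 * (ε * |d|)) ^ p :=
      Real.rpow_le_rpow (abs_nonneg _) h1 (by linarith)
    have h3 : (2 * (ε * |d|)) ^ p = (2:ℝ) ^ p * (ε ^ p * |d| ^ p) := by
      rw [Real.mul_rpow two_pos.le (mul_nonneg hεpos.le (abs_nonneg d)),
        Real.mul_rpow hεpos.le (abs_nonneg d)]
    -- bound on the linear term
    have hlin : -(p * (ε ^ p * |d| ^ p)) ≤ p * |a| ^ (p - 2) * a * (ε * d) := by
      rcases eq_or_ne a 0 with rfl | ha0
      · simp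
        positivity
      · have habs : |p * |a| ^ (p - 2) * a * (ε * d)| ≤ p * (ε ^ p * |d| ^ p) := by
          rw [abs_mul, abs_mul, abs_mul, abs_of_nonneg (by linarith : (0:ℝ) ≤ p),
            abs_of_nonneg hap2, hεd]
          have e4 : |a| ^ (p-2) * |a| = |a| ^ (p-1) := by
            rw [show p - 1 = p - 2 + 1 by ring, Real.rpow_add_one (abs_ne_zero.mpr ha0)]
          have e5 : |a| ^ (p-1) ≤ (ε * |d|) ^ (p-1) :=
            Real.rpow_le_rpow (abs_nonneg a) ha_lt.le (by linarith)
          have e6 : (ε * |d|) ^ (p-1) * (ε * |d|) = ε ^ p * |d| ^ p := by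
            rw [← Real.rpow_add_one (ne_of_gt hεdpos), show p - 1 + 1 = p by ring,
              Real.mul_rpow hεpos.le (abs_nonneg d)]
          calc p * |a| ^ (p-2) * |a| * (ε * |d|) = p * (|a| ^ (p-2) * |a|) * (ε * |d|) := by ring
            _ = p * |a| ^ (p-1) * (ε * |d|) := by rw [e4]
            _ ≤ p * (ε * |d|) ^ (p-1) * (ε * |d|) := by
                have := mul_le_mul_of_nonneg_right e5 hεdpos.le
                nlinarith
            _ = p * (ε ^ p * |d| ^ p) := by rw [mul_assoc, e6]
        have := neg_abs_le (p * |a| ^ (p - 2) * a * (ε * d))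
        linarith
    -- constant comparison
    have hconst2 : ((2:ℝ) ^ p + p) * ε ^ p ≤ (2:ℝ) ^ (-(4*p)) := by
      have hεp : ε ^ p = (2:ℝ) ^ (-(3*p) * p) := by
        rw [hε, ← Real.rpow_mul two_pos.le]
      have hp2 : p ≤ (2:ℝ) ^ p := le_two_rpow p
      have hsum : ((2:ℝ) ^ p + p) * ε ^ p ≤ 2 * (2:ℝ) ^ p * ε ^ p := by
        have hεpp : (0:ℝ) < ε ^ p := Real.rpow_pos_of_pos hεpos p
        nlinarith
      have hprod : 2 * (2:ℝ) ^ p * ε ^ p = (2:ℝ) ^ (1 + p + -(3*p) * p) := by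
        rw [hεp, Real.rpow_add two_pos, Real.rpow_add two_pos, Real.rpow_one]
      have hexp : (2:ℝ) ^ (1 + p + -(3*p) * p) ≤ (2:ℝ) ^ (-(4*p)) := by
        apply Real.rpow_le_rpow_left_iff (by norm_num : (1:ℝ) < 2) |>.mpr
        nlinarith
      linarith [hsum, hprod ▸ hexp]
    -- combine
    have hmul := mul_le_mul_of_nonneg_right hconst2 hdp
    have hap : (0:ℝ) ≤ |a| ^ p := Real.rpow_nonneg (abs_nonneg a) p
    have hq : (0:ℝ) ≤ (2:ℝ) ^ (-(4*p)) * (|a| ^ (p-2) * d ^ 2) := by positivity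
    nlinarith [h2, h3, hlin, hmul, hap, hq]

lemma per_index (p : ℝ) (hp : 2 ≤ p) (ri s a d : ℝ) (hri : 0 ≤ ri) (hs : 0 ≤ s) :
    ri * (a + (2:ℝ) ^ (-(3*p)) * d) ^ 2 + s * |a + (2:ℝ) ^ (-(3*p)) * d| ^ p ≤
      ri * a ^ 2 + s * |a| ^ p
        + (2:ℝ) ^ (-(3*p)) * ((2 * ri * a + p * s * |a| ^ (p - 2) * a) * d)
        + (2:ℝ) ^ (-(4*p)) * ((ri + s * |a| ^ (p - 2)) * d ^ 2 + s * |d| ^ p) := by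
  set ε : ℝ := (2:ℝ) ^ (-(3*p)) with hε
  set c : ℝ := (2:ℝ) ^ (-(4*p)) with hc
  have hε2 : ε ^ 2 = (2:ℝ) ^ (-(6*p)) := by
    rw [hε, ← Real.rpow_natCast ((2:ℝ) ^ (-(3*p))) 2, ← Real.rpow_mul two_pos.le]
    ring_nf
  have hε2c : ε ^ 2 ≤ c := by
    rw [hε2, hc]
    apply Real.rpow_le_rpow_left_iff (by norm_num : (1:ℝ) < 2) |>.mpr
    linarith
  have hquad : ri * (a + ε * d) ^ 2 ≤ ri * a ^ 2 + ε * (2 * ri * a * d) + c * (ri * d ^ 2) := by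
    nlinarith [mul_le_mul_of_nonneg_right hε2c (mul_nonneg hri (sq_nonneg d))]
  have hkey := key_main p hp a d
  have hkey' := mul_le_mul_of_nonneg_left hkey hs
  nlinarith [hquad, hkey']

/-- Iterative refinement, progress step: for any `δ` with `Aδ = 0`, the point
`x₁ = x₀ + 2^{-3p} δ` is feasible and `obj₁(x₁) ≥ obj₁(x₀) + 2^{-4p} obj₂(δ)`. -/
theorem residual_step_progress (p : ℝ) (hp : 2 ≤ p) (k m : ℕ)
    (A : Matrix (Fin k) (Fin m) ℝ) (b : Fin k → ℝ) (g r : Fin m → ℝ)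
    (hr : ∀ i, 0 ≤ r i) (s : ℝ) (hs : 0 ≤ s)
    (x₀ : Fin m → ℝ) (hx₀ : A.mulVec x₀ = b)
    (g' r' : Fin m → ℝ)
    (hg' : g' = fun i => 2 ^ p * (g i - gradHP p r s x₀ i))
    (hr' : r' = fun i => r i + s * |x₀ i| ^ (p - 2))
    (δ : Fin m → ℝ) (hδ : A.mulVec δ = 0) :
    A.mulVec (x₀ + (2 : ℝ) ^ (-(3 * p)) • δ) = b ∧
      objFn p g r s x₀ + 2 ^ (-(4 * p)) * objFn p g' r' s δ ≤
        objFn p g r s (x₀ + (2 : ℝ) ^ (-(3 * p)) • δ) := by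
  constructor
  · rw [Matrix.mulVec_add, Matrix.mulVec_smul, hδ, smul_zero, add_zero, hx₀]
  · have hce : (2:ℝ) ^ (-(4*p)) * (2:ℝ) ^ p = (2:ℝ) ^ (-(3*p)) := by
      rw [← Real.rpow_add two_pos]; ring_nf
    have hper : ∀ i ∈ Finset.univ (α := Fin m),
        (g i * x₀ i - (r i * x₀ i ^ 2 + s * |x₀ i| ^ p))
          + (2:ℝ) ^ (-(4*p)) * ((2 ^ p * (g i - gradHP p r s x₀ i)) * δ i
            - ((r i + s * |x₀ i| ^ (p - 2)) * δ i ^ 2 + s * |δ i| ^ p)) ≤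
        g i * (x₀ i + (2:ℝ) ^ (-(3*p)) * δ i)
          - (r i * (x₀ i + (2:ℝ) ^ (-(3*p)) * δ i) ^ 2
            + s * |x₀ i + (2:ℝ) ^ (-(3*p)) * δ i| ^ p) := by
      intro i _
      have hpi := per_index p hp (r i) s (x₀ i) (δ i) (hr i) hs
      simp only [gradHP]
      have e : (2:ℝ)^(-(4*p)) * ((2:ℝ)^p * (g i - (2 * r i * x₀ i
            + p * s * |x₀ i| ^ (p - 2) * x₀ i)) * δ i)
          = (2:ℝ)^(-(3*p)) * ((g i - (2 * r i * x₀ i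
            + p * s * |x₀ i| ^ (p - 2) * x₀ i)) * δ i) := by
        rw [← hce]; ring
      nlinarith [hpi, e]
    have hsum := Finset.sum_le_sum hper
    calc objFn p g r s x₀ + 2 ^ (-(4 * p)) * objFn p g' r' s δ
        = ∑ i, ((g i * x₀ i - (r i * x₀ i ^ 2 + s * |x₀ i| ^ p))
          + (2:ℝ) ^ (-(4*p)) * ((2 ^ p * (g i - gradHP p r s x₀ i)) * δ i
            - ((r i + s * |x₀ i| ^ (p - 2)) * δ i ^ 2 + s * |δ i| ^ p))) := by
          simp only [objFn, hP, hg', hr']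
          rw [← Finset.sum_sub_distrib, ← Finset.sum_sub_distrib, Finset.mul_sum,
            ← Finset.sum_add_distrib]
      _ ≤ ∑ i, (g i * (x₀ i + (2:ℝ) ^ (-(3*p)) * δ i)
          - (r i * (x₀ i + (2:ℝ) ^ (-(3*p)) * δ i) ^ 2
            + s * |x₀ i + (2:ℝ) ^ (-(3*p)) * δ i| ^ p)) := hsum
      _ = objFn p g r s (x₀ + (2 : ℝ) ^ (-(3 * p)) • δ) := by
          simp only [objFn, hP, Pi.add_apply, Pi.smul_apply, smul_eq_mul]
          rw [← Finset.sum_sub_distrib]
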